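/- arXiv:2102.11549 — 3 statements merged into one kernel-verified Lean document; each statement's English description precedes it below -/
import Mathlib

section
/- Let d ≥ 5, m ≥ 1, and ℓ_1 ≥ 1 be integers such that ℓ_1·(m+1) < C(m+d, d). Then C(m+d-1, d-1) - C(m+2, 2) - ℓ_1 + 1 > 0. -/
theorem stmt7 (d m ℓ₁ : ℕ) (hd : 5 ≤ d) (hm : 1 ≤ m) (hℓ : 1 ≤ ℓ₁)
    (h : ℓ₁ * (m + 1) < (m + d).choose d) :
    0 < ((m + d - 1).choose (d - 1) : ℤ) - ((m + 2).choose 2 : ℤ) - (ℓ₁ : ℤ) + 1 := by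
  by_contra hcon
  push_neg at hcon
  have f1 : (m + d) * (m + d - 1).choose (d - 1) = (m + d).choose d * d := by
    have := Nat.add_one_mul_choose_eq (m + d - 1) (d - 1)
    have e1 : m + d - 1 + 1 = m + d := by omega
    have e2 : d - 1 + 1 = d := by omega
    simp only [Nat.succ_eq_add_one, e1, e2] at this
    exact this
  have f2 : (m + 2).choose 2 * 2 = (m + 1 + 1) * (m + 1) := by
    have := Nat.add_one_mul_choose_eq (m + 1) 1
    simp only [Nat.succ_eq_add_one, Nat.choose_one_right] at this
    exact this.symm
  have f3 : (m + 4).choose 4 ≤ (m + d - 1).choose (d - 1) := by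
    have s1 : (m + d - 1).choose (d - 1) = (m + d - 1).choose m := by
      have := Nat.choose_symm (show m ≤ m + d - 1 by omega)
      rwa [show m + d - 1 - m = d - 1 from by omega] at this
    have s2 : (m + 4).choose 4 = (m + 4).choose m := by
      have := Nat.choose_symm (show m ≤ m + 4 by omega)
      rwa [show m + 4 - m = 4 from by omega] at this
    rw [s1, s2]
    exact Nat.choose_le_choose m (by omega)
  have c3 : (m + 2 + 1) * (m + 2).choose 2 = (m + 3).choose 3 * 3 := by
    have := Nat.add_one_mul_choose_eq (m + 2) 2
    simpa [Nat.succ_eq_add_one] using this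
  have c4 : (m + 3 + 1) * (m + 3).choose 3 = (m + 4).choose 4 * 4 := by
    have := Nat.add_one_mul_choose_eq (m + 3) 3
    simpa [Nat.succ_eq_add_one] using this
  -- integer versions
  have he5 : (5 : ℤ) ≤ (d : ℤ) := by exact_mod_cast hd
  have ha1 : (1 : ℤ) ≤ (m : ℤ) := by exact_mod_cast hm
  have zf1 : ((m : ℤ) + d) * ((m + d - 1).choose (d - 1) : ℤ)
      = ((m + d).choose d : ℤ) * d := by exact_mod_cast f1
  have zf2 : ((m + 2).choose 2 : ℤ) * 2 = ((m : ℤ) + 2) * ((m : ℤ) + 1) := by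
    exact_mod_cast f2
  have zf3 : ((m + 4).choose 4 : ℤ) ≤ ((m + d - 1).choose (d - 1) : ℤ) := by
    exact_mod_cast f3
  have zc3 : ((m : ℤ) + 3) * ((m + 2).choose 2 : ℤ) = ((m + 3).choose 3 : ℤ) * 3 := by
    exact_mod_cast c3
  have zc4 : ((m : ℤ) + 4) * ((m + 3).choose 3 : ℤ) = ((m + 4).choose 4 : ℤ) * 4 := by
    exact_mod_cast c4
  set a : ℤ := (m : ℤ)
  set e : ℤ := (d : ℤ)
  set A : ℤ := ((m + d - 1).choose (d - 1) : ℤ)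
  set B : ℤ := ((m + 2).choose 2 : ℤ)
  set N : ℤ := ((m + d).choose d : ℤ)
  set C4 : ℤ := ((m + 4).choose 4 : ℤ)
  set D : ℤ := ((m + 3).choose 3 : ℤ)
  set L : ℤ := (ℓ₁ : ℤ)
  have zf4 : C4 * 24 = (a + 1) * (a + 2) * (a + 3) * (a + 4) := by
    linear_combination (-6 : ℤ) * zc4 - 2 * (a + 4) * zc3 + (a + 3) * (a + 4) * zf2
  have zh : L * (a + 1) < N := by
    have : (ℓ₁ : ℤ) * ((m : ℤ) + 1) < ((m + d).choose d : ℤ) := by exact_mod_cast h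
    exact this
  have zcon : A - B + 1 ≤ L := by linarith
  have he0 : (0 : ℤ) ≤ e := by linarith
  have key1 : e * (L * (a + 1) + 1) ≤ (a + e) * A := by
    have t : e * (L * (a + 1) + 1) ≤ e * N :=
      mul_le_mul_of_nonneg_left (by linarith) he0
    linarith [t]
  have key2 : e * ((A - B + 1) * (a + 1)) ≤ e * (L * (a + 1)) :=
    mul_le_mul_of_nonneg_left
      (mul_le_mul_of_nonneg_right zcon (by linarith)) he0
  have k1 : a * (e - 1) * A + e ≤ e * (a + 1) * (B - 1) := by nlinarith [key1, key2]
  have k2 : 24 * (e * (a + 1) * (B - 1)) = 12 * e * a * (a + 1) * (a + 3) := by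
    linear_combination 12 * e * (a + 1) * zf2
  have k4 : (a + 1) * (a + 2) * (a + 3) * (a + 4) ≤ 24 * A := by linarith
  have hnn : (0 : ℤ) ≤ a * (e - 1) := mul_nonneg (by linarith) (by linarith)
  have k5 : a * (e - 1) * ((a + 1) * (a + 2) * (a + 3) * (a + 4))
      ≤ a * (e - 1) * (24 * A) :=
    mul_le_mul_of_nonneg_left k4 hnn
  have hP : (0 : ℤ) ≤ (e - 5) * (a * (a + 1) * (a + 3)) :=
    mul_nonneg (by linarith)
      (mul_nonneg (mul_nonneg (by linarith) (by linarith)) (by linarith))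
  have h15 : (15 : ℤ) ≤ (a + 2) * (a + 4) := by
    have := mul_le_mul (show (3 : ℤ) ≤ a + 2 by linarith)
      (show (5 : ℤ) ≤ a + 4 by linarith) (by norm_num) (by linarith)
    linarith
  have hQ : (0 : ℤ) ≤ (e - 1) * a * (a + 1) * (a + 3) * ((a + 2) * (a + 4) - 15) :=
    mul_nonneg
      (mul_nonneg (mul_nonneg (mul_nonneg (by linarith) (by linarith)) (by linarith))
        (by linarith))
      (by linarith)
  linarith [k1, k2, k5, hP, hQ, he5]
end

section
/- For integers d ≥ 3, define A_{ℓ_1,ℓ_2} := coeff_d( ((1-t)^{ℓ_1}(1-t^2)^{ℓ_2}/(1-t)^{n+1}) · (1 - ℓ_1·t^{d-1} - ℓ_2·t^{d-2}) ). Then for ℓ_1, ℓ_2 ≥ 0 with ℓ_1 + ℓ_2 < n and m := n - ℓ_1, one has A_{ℓ_1,ℓ_2} = coeff_d( (1/(1-t))^{m+1-ℓ_2} · (1+t)^{ℓ_2} ) - ℓ_2·C(m+2, 2) - ℓ_1·(m+1) + ℓ_2². -/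
open PowerSeries Finset

/-- `A_{ℓ₁,ℓ₂}` from the paper, for fixed `d` and `n`. -/
noncomputable def A (d n ℓ₁ ℓ₂ : ℕ) : ℚ :=
  PowerSeries.coeff d
    ((1 - (PowerSeries.X : PowerSeries ℚ)) ^ ℓ₁ *
      (1 - (PowerSeries.X : PowerSeries ℚ) ^ 2) ^ ℓ₂ *
      ((1 - (PowerSeries.X : PowerSeries ℚ))⁻¹) ^ (n + 1) *
      (1 - (ℓ₁ : PowerSeries ℚ) * PowerSeries.X ^ (d - 1) -
        (ℓ₂ : PowerSeries ℚ) * PowerSeries.X ^ (d - 2)))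

lemma aux_coeff_one_add_X_pow (n j : ℕ) :
    PowerSeries.coeff j ((1 + X : ℚ⟦X⟧) ^ n) = n.choose j := by
  have key : ∀ b c : ℕ, coeff j (X ^ b * (c : ℚ⟦X⟧)) = if j = b then (c : ℚ) else 0 := by
    intro b c
    rw [← map_natCast (C (R := ℚ)), mul_comm, coeff_C_mul, coeff_X_pow]
    split <;> simp
  rw [add_comm, add_pow]
  simp only [one_pow, mul_one, map_sum, key]
  rw [Finset.sum_ite_eq (range (n + 1)) j]
  split <;> rename_i hm
  · rfl
  · rw [Nat.choose_eq_zero_of_lt (by simpa using hm), Nat.cast_zero]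

lemma aux_one_sub_mul_inv : (1 - X : ℚ⟦X⟧) * (1 - X)⁻¹ = 1 :=
  PowerSeries.mul_inv_cancel _ (by simp)

lemma aux_U_pow (k : ℕ) : ((1 - X : ℚ⟦X⟧)⁻¹) ^ k = (invOneSubPow ℚ k).val := by
  have h2 : (1 - X : ℚ⟦X⟧) ^ k * (invOneSubPow ℚ k).val = 1 := by
    rw [← invOneSubPow_inv_eq_one_sub_pow]; exact (invOneSubPow ℚ k).inv_val
  have h1 : (1 - X : ℚ⟦X⟧) ^ k * ((1 - X)⁻¹) ^ k = 1 := by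
    rw [← mul_pow, aux_one_sub_mul_inv, one_pow]
  have hne : (1 - X : ℚ⟦X⟧) ^ k ≠ 0 := by
    apply pow_ne_zero
    intro hc
    have := congrArg (constantCoeff) hc
    simp at this
  exact mul_left_cancel₀ hne (h1.trans h2.symm)

lemma aux_coeff_U_pow (k j : ℕ) (hk : 0 < k) :
    PowerSeries.coeff j (((1 - X : ℚ⟦X⟧)⁻¹) ^ k) = (k - 1 + j).choose (k - 1) := by
  rw [aux_U_pow, invOneSubPow_val_eq_mk_sub_one_add_choose_of_pos _ _ hk, coeff_mk]

lemma aux_coeff_one_mul (f g : ℚ⟦X⟧) :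
    PowerSeries.coeff 1 (f * g) =
      coeff 0 f * coeff 1 g + coeff 1 f * coeff 0 g := by
  rw [coeff_mul, Finset.Nat.sum_antidiagonal_eq_sum_range_succ_mk]
  simp [Finset.sum_range_succ]

lemma aux_coeff_two_mul (f g : ℚ⟦X⟧) :
    PowerSeries.coeff 2 (f * g) =
      coeff 0 f * coeff 2 g + coeff 1 f * coeff 1 g + coeff 2 f * coeff 0 g := by
  rw [coeff_mul, Finset.Nat.sum_antidiagonal_eq_sum_range_succ_mk]
  simp [Finset.sum_range_succ]

theorem stmt8 (d n ℓ₁ ℓ₂ : ℕ) (hd : 3 ≤ d) (hn : 1 ≤ n) (h : ℓ₁ + ℓ₂ < n) :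
    A d n ℓ₁ ℓ₂ =
      PowerSeries.coeff d
          (((1 - (PowerSeries.X : PowerSeries ℚ))⁻¹) ^ (n - ℓ₁ + 1 - ℓ₂) *
            (1 + (PowerSeries.X : PowerSeries ℚ)) ^ ℓ₂) -
        (ℓ₂ : ℚ) * ((n - ℓ₁ + 2).choose 2 : ℚ) - (ℓ₁ : ℚ) * ((n - ℓ₁ : ℕ) + 1 : ℚ) +
        (ℓ₂ : ℚ) ^ 2 := by
  set m : ℕ := n - ℓ₁ with hmdef
  set k : ℕ := n - ℓ₁ + 1 - ℓ₂ with hkdef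
  obtain ⟨k', hk'⟩ : ∃ k', k = k' + 2 := ⟨n - ℓ₁ - 1 - ℓ₂, by omega⟩
  set F : ℚ⟦X⟧ := ((1 - X)⁻¹) ^ k * (1 + X) ^ ℓ₂ with hF
  have step1 : (1 - X : ℚ⟦X⟧) ^ ℓ₁ * (1 - X ^ 2) ^ ℓ₂ * ((1 - X)⁻¹) ^ (n + 1) = F := by
    have hsum : n + 1 = ℓ₁ + ℓ₂ + k := by omega
    have e1 : (1 - X : ℚ⟦X⟧) ^ ℓ₁ * ((1 - X)⁻¹) ^ ℓ₁ = 1 := by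
      rw [← mul_pow, aux_one_sub_mul_inv, one_pow]
    have e2 : (1 - X : ℚ⟦X⟧) ^ ℓ₂ * ((1 - X)⁻¹) ^ ℓ₂ = 1 := by
      rw [← mul_pow, aux_one_sub_mul_inv, one_pow]
    have h12 : (1 - X ^ 2 : ℚ⟦X⟧) = (1 - X) * (1 + X) := by ring
    rw [hsum, h12, mul_pow, pow_add, pow_add]
    calc (1 - X : ℚ⟦X⟧) ^ ℓ₁ * ((1 - X) ^ ℓ₂ * (1 + X) ^ ℓ₂) *
          (((1 - X)⁻¹) ^ ℓ₁ * ((1 - X)⁻¹) ^ ℓ₂ * ((1 - X)⁻¹) ^ k)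
        = ((1 - X) ^ ℓ₁ * ((1 - X)⁻¹) ^ ℓ₁) * ((1 - X) ^ ℓ₂ * ((1 - X)⁻¹) ^ ℓ₂) *
          (((1 - X)⁻¹) ^ k * (1 + X) ^ ℓ₂) := by ring
      _ = F := by rw [e1, e2, hF]; ring
  have hd1 : d - 1 ≤ d := by omega
  have hd2 : d - 2 ≤ d := by omega
  have hdd1 : d - (d - 1) = 1 := by omega
  have hdd2 : d - (d - 2) = 2 := by omega
  have c1 : coeff 1 F = (ℓ₂ : ℚ) + k := by
    rw [hF, aux_coeff_one_mul, aux_coeff_U_pow _ _ (by omega), aux_coeff_U_pow _ _ (by omega),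
      aux_coeff_one_add_X_pow, aux_coeff_one_add_X_pow, hk',
      show k' + 2 - 1 + 0 = k' + 1 by omega, show k' + 2 - 1 + 1 = k' + 2 by omega,
      show k' + 2 - 1 = k' + 1 by omega,
      show (k' + 2).choose (k' + 1) = k' + 2 from Nat.choose_succ_self_right _]
    simp only [Nat.choose_self, Nat.choose_zero_right, Nat.choose_one_right, Nat.cast_one,
      one_mul, mul_one]
  have c2 : coeff 2 F =
      (ℓ₂.choose 2 : ℚ) + (k : ℚ) * ℓ₂ + ((k + 1).choose 2 : ℚ) := by
    rw [hF, aux_coeff_two_mul, aux_coeff_U_pow _ _ (by omega), aux_coeff_U_pow _ _ (by omega),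
      aux_coeff_U_pow _ _ (by omega), aux_coeff_one_add_X_pow, aux_coeff_one_add_X_pow,
      aux_coeff_one_add_X_pow, hk']
    have h3 : (k' + 2 - 1 + 2).choose (k' + 2 - 1) = (k' + 3).choose 2 := by
      have : k' + 2 - 1 + 2 = k' + 3 := by omega
      rw [this, show k' + 2 - 1 = k' + 3 - 2 by omega, Nat.choose_symm (by omega)]
    rw [h3, show k' + 2 - 1 + 0 = k' + 1 by omega, show k' + 2 - 1 + 1 = k' + 2 by omega,
      show k' + 2 - 1 = k' + 1 by omega, show (k' + 2).choose (k' + 1) = k' + 2 from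
        Nat.choose_succ_self_right _]
    simp only [Nat.choose_self, Nat.choose_zero_right, Nat.choose_one_right, Nat.cast_one,
      one_mul, mul_one]
  rw [A, step1, mul_sub, mul_sub, mul_one, map_sub, map_sub,
    mul_left_comm F, mul_left_comm F, ← map_natCast (C (R := ℚ)) ℓ₁, ← map_natCast (C (R := ℚ)) ℓ₂,
    coeff_C_mul, coeff_C_mul, coeff_mul_X_pow', coeff_mul_X_pow', if_pos hd1, if_pos hd2,
    hdd1, hdd2, c1, c2]
  have hkq : (k : ℚ) = (m : ℚ) + 1 - (ℓ₂ : ℚ) := by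
    have h1 : k + ℓ₂ = m + 1 := by omega
    have := congrArg (Nat.cast : ℕ → ℚ) h1
    push_cast at this
    linarith
  rw [Nat.cast_choose_two, Nat.cast_choose_two, Nat.cast_choose_two]
  push_cast
  rw [hkq]
  ring
end

section
/- Let n ≥ 2, r < n, and a_1, …, a_r ≥ 1 be integers with a_i ≤ d/2 for all i, where d ≥ 4. Let ℓ := #{i : a_i = d/2} (so ℓ = 0 if d is odd). Then, writing N+1 := C(n+d, d) - coeff_d( ∏_{i=1}^r (1-t^{a_i}) / (1-t)^{n+1} ) and M := ∑_{j=1}^r coeff_{a_j}( ∏_{i=1}^r (1-t^{a_i}) / (1-t)^{n+1} ), one has the identity M + N + 1 - 1 = C(n+d,d) - coeff_d( ∏_{i=1}^r (1-t^{a_i})(1-t^{d-a_i}) / (1-t)^{n+1} ) + C(ℓ, 2) - 1; equivalently, coeff_d( ∏_{i=1}^r (1-t^{a_i})(1-t^{d-a_i}) / (1-t)^{n+1} ) = coeff_d( ∏_{i=1}^r (1-t^{a_i}) / (1-t)^{n+1} ) - ∑_{j=1}^r coeff_{a_j}( ∏_{i=1}^r (1-t^{a_i}) / (1-t)^{n+1}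 ) + C(ℓ, 2). -/
open PowerSeries Finset

theorem stmt12 (d n r : ℕ) (a : Fin r → ℕ) (hd : 4 ≤ d) (hn : 2 ≤ n) (hr : r < n)
    (ha1 : ∀ i, 1 ≤ a i) (ha2 : ∀ i, 2 * a i ≤ d) :
    PowerSeries.coeff (R := ℚ) d
        ((∏ i, ((1 - (PowerSeries.X : PowerSeries ℚ) ^ (a i)) *
            (1 - (PowerSeries.X : PowerSeries ℚ) ^ (d - a i)))) *
          ((1 - (PowerSeries.X : PowerSeries ℚ))⁻¹) ^ (n + 1)) =
      PowerSeries.coeff (R := ℚ) d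
          ((∏ i, (1 - (PowerSeries.X : PowerSeries ℚ) ^ (a i))) *
            ((1 - (PowerSeries.X : PowerSeries ℚ))⁻¹) ^ (n + 1)) -
        (∑ j, PowerSeries.coeff (R := ℚ) (a j)
          ((∏ i, (1 - (PowerSeries.X : PowerSeries ℚ) ^ (a i))) *
            ((1 - (PowerSeries.X : PowerSeries ℚ))⁻¹) ^ (n + 1))) +
        (((Finset.univ.filter fun i => 2 * a i = d).card.choose 2 : ℕ) : ℚ) := by
  set F : PowerSeries ℚ :=
    (∏ i, (1 - (PowerSeries.X : PowerSeries ℚ) ^ (a i))) *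
      ((1 - (PowerSeries.X : PowerSeries ℚ))⁻¹) ^ (n + 1) with hF
  have hane : ∀ i, a i ≠ 0 := fun i => Nat.one_le_iff_ne_zero.mp (ha1 i)
  -- constant coefficient of F is 1
  have hF0 : PowerSeries.coeff (R := ℚ) 0 F = 1 := by
    simp only [hF, PowerSeries.coeff_zero_eq_constantCoeff, map_mul, map_prod, map_sub, map_pow,
      map_one, PowerSeries.constantCoeff_X, PowerSeries.constantCoeff_inv]
    rw [Finset.prod_eq_one (fun i _ => by rw [zero_pow (hane i), sub_zero])]
    simp
  set P2 : Finset (Fin r) := Finset.univ.filter fun i => 2 * a i = d with hP2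
  set w : Finset (Fin r) → ℕ := fun t => ∑ i ∈ t, (d - a i) with hw
  -- split off the second product
  have hsplit : (∏ i, ((1 - (PowerSeries.X : PowerSeries ℚ) ^ (a i)) *
            (1 - (PowerSeries.X : PowerSeries ℚ) ^ (d - a i)))) *
          ((1 - (PowerSeries.X : PowerSeries ℚ))⁻¹) ^ (n + 1)
      = ∑ t ∈ (Finset.univ : Finset (Fin r)).powerset,
          (∏ i ∈ t, (-(PowerSeries.X : PowerSeries ℚ) ^ (d - a i))) * F := by
    rw [Finset.prod_mul_distrib]
    have h1 : (∏ i, (1 - (PowerSeries.X : PowerSeries ℚ) ^ (d - a i)))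
        = ∑ t ∈ (Finset.univ : Finset (Fin r)).powerset,
            ∏ i ∈ t, (-(PowerSeries.X : PowerSeries ℚ) ^ (d - a i)) := by
      rw [Finset.prod_congr rfl
        (fun i _ => show (1 : PowerSeries ℚ) - X ^ (d - a i)
          = (-(X : PowerSeries ℚ) ^ (d - a i)) + 1 by ring)]
      rw [Finset.prod_add]
      simp
    calc (∏ i, (1 - (PowerSeries.X : PowerSeries ℚ) ^ (a i))) *
            (∏ i, (1 - (PowerSeries.X : PowerSeries ℚ) ^ (d - a i))) *
          ((1 - (PowerSeries.X : PowerSeries ℚ))⁻¹) ^ (n + 1)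
        = (∏ i, (1 - (PowerSeries.X : PowerSeries ℚ) ^ (d - a i))) * F := by rw [hF]; ring
      _ = _ := by rw [h1, Finset.sum_mul]
  rw [hsplit, map_sum]
  have step : ∀ t : Finset (Fin r),
      PowerSeries.coeff (R := ℚ) d ((∏ i ∈ t, (-(PowerSeries.X : PowerSeries ℚ) ^ (d - a i))) * F)
      = (-1 : ℚ) ^ t.card *
          (if w t ≤ d then PowerSeries.coeff (R := ℚ) (d - w t) F else 0) := by
    intro t
    have h1 : (∏ i ∈ t, (-(PowerSeries.X : PowerSeries ℚ) ^ (d - a i)))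
        = (-1 : PowerSeries ℚ) ^ t.card * (PowerSeries.X : PowerSeries ℚ) ^ (w t) := by
      simp only [neg_eq_neg_one_mul ((PowerSeries.X : PowerSeries ℚ) ^ _),
        Finset.prod_mul_distrib, Finset.prod_const, Finset.prod_pow_eq_pow_sum, hw]
    rw [h1, show (-1 : PowerSeries ℚ) ^ t.card * (PowerSeries.X : PowerSeries ℚ) ^ (w t) * F
        = PowerSeries.C (R := ℚ) ((-1 : ℚ) ^ t.card) * (F * (PowerSeries.X : PowerSeries ℚ) ^ (w t))
        by rw [map_pow, map_neg, map_one]; ring,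
      PowerSeries.coeff_C_mul, PowerSeries.coeff_mul_X_pow']
  rw [Finset.sum_congr rfl (fun t _ => step t)]
  -- termwise classification
  have hterm : ∀ t ∈ (Finset.univ : Finset (Fin r)).powerset,
      (-1 : ℚ) ^ t.card *
          (if w t ≤ d then PowerSeries.coeff (R := ℚ) (d - w t) F else 0)
      = (if t = ∅ then PowerSeries.coeff (R := ℚ) d F else 0)
        + (∑ j, if t = {j} then -(PowerSeries.coeff (R := ℚ) (a j) F) else 0)
        + (if t ∈ Finset.powersetCard 2 P2 then 1 else 0) := by
    intro t _
    by_cases h0 : t = ∅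
    · subst h0
      have : ∀ j : Fin r, (∅ : Finset (Fin r)) ≠ {j} := fun j h => by
        simpa using congrArg Finset.card h
      simp [hw, this, Finset.mem_powersetCard]
    · by_cases h1 : t.card = 1
      · obtain ⟨j, rfl⟩ := Finset.card_eq_one.mp h1
        have hwj : w {j} = d - a j := Finset.sum_singleton _ _
        have haj : a j ≤ d := by have := ha2 j; omega
        have h2 : ¬ ({j} : Finset (Fin r)) ∈ Finset.powersetCard 2 P2 := by
          rw [Finset.mem_powersetCard]; rintro ⟨-, h⟩; simp at h
        simp only [hwj, Finset.card_singleton, pow_one, Nat.sub_le, if_true,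
          Nat.sub_sub_self haj, Finset.singleton_ne_empty, if_neg, h2, if_false,
          Finset.singleton_inj]
        rw [Finset.sum_ite_eq (Finset.univ : Finset (Fin r)) j
          (fun j' => -(PowerSeries.coeff (R := ℚ) (a j') F))]
        simp
      · by_cases h2 : t.card = 2
        · obtain ⟨i, j, hij, rfl⟩ := Finset.card_eq_two.mp h2
          have hwij : w {i, j} = (d - a i) + (d - a j) := Finset.sum_pair hij
          have Hi := ha2 i; have Hj := ha2 j
          have hcard : ({i, j} : Finset (Fin r)).card = 2 := Finset.card_pair hij
          have hnsing : ∀ j' : Fin r, ({i, j} : Finset (Fin r)) ≠ {j'} := fun j' h => by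
            have := congrArg Finset.card h
            rw [hcard] at this; simp at this
          have hne : ({i, j} : Finset (Fin r)) ≠ ∅ := by simp
          by_cases hP : 2 * a i = d ∧ 2 * a j = d
          · have hwd : w {i, j} = d := by rw [hwij]; omega
            have hmem : ({i, j} : Finset (Fin r)) ∈ Finset.powersetCard 2 P2 := by
              rw [Finset.mem_powersetCard]
              exact ⟨Finset.insert_subset (by simp [hP2, hP.1])
                (by simp [hP2, hP.2]), hcard⟩
            simp [hwd, hcard, hF0, hnsing, hne, hmem]
          · have hwd : ¬ (w {i, j} ≤ d) := by rw [hwij]; omega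
            have hmem : ¬ (({i, j} : Finset (Fin r)) ∈ Finset.powersetCard 2 P2) := by
              rw [Finset.mem_powersetCard]
              rintro ⟨hsub, -⟩
              have hi : i ∈ P2 := hsub (by simp)
              have hj : j ∈ P2 := hsub (by simp)
              rw [hP2, Finset.mem_filter] at hi hj
              exact hP ⟨hi.2, hj.2⟩
            simp [hwd, hnsing, hne, hmem]
        · -- card ≥ 3
          have h3 : 3 ≤ t.card := by
            have h0' : t.card ≠ 0 := fun h => h0 (Finset.card_eq_zero.mp h)
            omega
          have hwd : ¬ (w t ≤ d) := by
            have hb : ∀ i ∈ t, d ≤ 2 * (d - a i) := fun i _ => by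
              have := ha2 i; omega
            have h4 : t.card * d ≤ ∑ i ∈ t, 2 * (d - a i) := by
              calc t.card * d = ∑ _i ∈ t, d := by rw [Finset.sum_const, smul_eq_mul]
                _ ≤ _ := Finset.sum_le_sum hb
            rw [← Finset.mul_sum] at h4
            intro hle
            simp only [hw] at hle
            have h5 : 3 * d ≤ t.card * d := Nat.mul_le_mul_right d h3
            omega
          have hnsing : ∀ j' : Fin r, t ≠ {j'} := fun j' h => by
            rw [h] at h1; simp at h1
          have hmem : ¬ (t ∈ Finset.powersetCard 2 P2) := by
            rw [Finset.mem_powersetCard]; rintro ⟨-, h⟩; exact h2 h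
          simp [hwd, h0, hnsing, hmem]
  rw [Finset.sum_congr rfl hterm]
  rw [Finset.sum_add_distrib, Finset.sum_add_distrib]
  have e1 : ∑ t ∈ (Finset.univ : Finset (Fin r)).powerset,
      (if t = ∅ then PowerSeries.coeff (R := ℚ) d F else 0) = PowerSeries.coeff (R := ℚ) d F := by
    rw [Finset.sum_ite_eq' _ ∅ (fun _ => PowerSeries.coeff (R := ℚ) d F)]
    simp
  have e2 : ∑ t ∈ (Finset.univ : Finset (Fin r)).powerset,
      (∑ j, if t = {j} then -(PowerSeries.coeff (R := ℚ) (a j) F) else 0)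
      = -(∑ j, PowerSeries.coeff (R := ℚ) (a j) F) := by
    rw [Finset.sum_comm]
    rw [← Finset.sum_neg_distrib]
    refine Finset.sum_congr rfl fun j _ => ?_
    rw [Finset.sum_ite_eq' _ ({j} : Finset (Fin r))
      (fun _ => -(PowerSeries.coeff (R := ℚ) (a j) F))]
    simp
  have e3 : ∑ t ∈ (Finset.univ : Finset (Fin r)).powerset,
      (if t ∈ Finset.powersetCard 2 P2 then (1 : ℚ) else 0)
      = ((P2.card.choose 2 : ℕ) : ℚ) := by
    rw [Finset.sum_boole]
    rw [Finset.filter_mem_eq_inter,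
      Finset.inter_eq_right.mpr (fun t ht => Finset.mem_powerset.mpr (Finset.subset_univ t)),
      Finset.card_powersetCard]
  rw [e1, e2, e3]
  ring
end
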